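/- arXiv:1203.1960 — 7 statements merged into one kernel-verified Lean document; each statement's English description precedes it below -/
import Mathlib

section
/- For all natural numbers x, y with x ≥ 2 and y ≥ 2, one has f̃(x)·f̃(y) ≤ f̃(x·y). -/
open Real

/-- The function `f(x) = (2x+1)^(2·log₃(2x+1)+1)`. -/
noncomputable def f (x : ℝ) : ℝ :=
  (2 * x + 1) ^ (2 * Real.logb 3 (2 * x + 1) + 1)

/-- The modified function `f̃` on naturals: `f̃(2) = 60` and `f̃(n) = f(n)` otherwise. -/
noncomputable def ftilde (n : ℕ) : ℝ :=
  if n = 2 then 60 else f n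

lemma f_eq {t : ℝ} (ht : 0 < 2 * t + 1) :
    f t = (3:ℝ) ^ (Real.logb 3 (2 * t + 1) * (2 * Real.logb 3 (2 * t + 1) + 1)) := by
  rw [f, Real.rpow_mul (by norm_num : (0:ℝ) ≤ 3),
    Real.rpow_logb (by norm_num) (by norm_num) ht]

lemma le_logb_of (p q : ℕ) {x : ℝ} (hq : 0 < q) (hx : 0 < x)
    (h : (3:ℝ)^p ≤ x^q) : (p : ℝ)/q ≤ Real.logb 3 x := by
  rw [Real.le_logb_iff_rpow_le (by norm_num) hx]
  have key : ((3:ℝ) ^ ((p:ℝ)/q)) ^ q = (3:ℝ)^p := by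
    rw [← Real.rpow_natCast ((3:ℝ) ^ ((p:ℝ)/q)) q, ← Real.rpow_mul (by norm_num),
      div_mul_cancel₀, Real.rpow_natCast]
    exact_mod_cast hq.ne'
  refine le_of_pow_le_pow_left₀ hq.ne' hx.le ?_
  rw [key]; exact h

lemma logb_le_of (p q : ℕ) {x : ℝ} (hq : 0 < q) (hx : 0 < x)
    (h : x^q ≤ (3:ℝ)^p) : Real.logb 3 x ≤ (p : ℝ)/q := by
  rw [Real.logb_le_iff_le_rpow (by norm_num) hx]
  have key : ((3:ℝ) ^ ((p:ℝ)/q)) ^ q = (3:ℝ)^p := by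
    rw [← Real.rpow_natCast ((3:ℝ) ^ ((p:ℝ)/q)) q, ← Real.rpow_mul (by norm_num),
      div_mul_cancel₀, Real.rpow_natCast]
    exact_mod_cast hq.ne'
  refine le_of_pow_le_pow_left₀ hq.ne'
    (Real.rpow_nonneg (by norm_num) _) ?_
  rw [key]; exact h

lemma hs_lb : (1:ℝ)/2 ≤ Real.logb 3 (49/19) := by
  have := le_logb_of 1 2 (x := (49:ℝ)/19) (by norm_num) (by norm_num) (by norm_num)
  simpa using this

lemma hs_ub : Real.logb 3 (49/19) ≤ (7:ℝ)/8 := by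
  have := logb_le_of 7 8 (x := (49:ℝ)/19) (by norm_num) (by norm_num) (by norm_num)
  simpa using this

lemma hd_lb : (1:ℝ)/2 ≤ Real.logb 3 (13/7) := by
  have := le_logb_of 1 2 (x := (13:ℝ)/7) (by norm_num) (by norm_num) (by norm_num)
  simpa using this

lemma h60 : Real.logb 3 60 ≤ (15:ℝ)/4 := by
  have := logb_le_of 15 4 (x := (60:ℝ)) (by norm_num) (by norm_num) (by norm_num)
  simpa using this

lemma ha_lb {t : ℝ} (ht : 7 ≤ t) : (7:ℝ)/4 ≤ Real.logb 3 t := by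
  have := le_logb_of 7 4 (x := t) (by norm_num) (by linarith)
    (by nlinarith [pow_le_pow_left₀ (by norm_num : (0:ℝ) ≤ 7) ht 4])
  simpa using this

lemma key1 {a b c s : ℝ} (ha : 7/4 ≤ a) (hb : 7/4 ≤ b) (hs1 : 1/2 ≤ s) (hs2 : s ≤ 7/8)
    (hc : a + b - s ≤ c) : a * (2*a+1) + b * (2*b+1) ≤ c * (2*c+1) := by
  nlinarith [mul_nonneg (by linarith : (0:ℝ) ≤ a - s - 7/8) (by linarith : (0:ℝ) ≤ b - s - 7/8),
    mul_nonneg (by linarith : (0:ℝ) ≤ c - (a+b-s)) (by linarith : (0:ℝ) ≤ c + (a+b-s)),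
    sq_nonneg (a - b), sq_nonneg (s - 1/2)]

lemma key2 {b c : ℝ} (hb : 7/4 ≤ b) (hc : b + 1/2 ≤ c) :
    15/4 + b * (2*b+1) ≤ c * (2*c+1) := by
  nlinarith [mul_nonneg (by linarith : (0:ℝ) ≤ c - (b+1/2)) (by linarith : (0:ℝ) ≤ c + (b+1/2))]

lemma main3 {x y : ℕ} (hx : 3 ≤ x) (hy : 3 ≤ y) : f x * f y ≤ f ((x*y : ℕ)) := by
  have hxr : (3:ℝ) ≤ x := by exact_mod_cast hx
  have hyr : (3:ℝ) ≤ y := by exact_mod_cast hy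
  have hX : (7:ℝ) ≤ 2*(x:ℝ)+1 := by linarith
  have hY : (7:ℝ) ≤ 2*(y:ℝ)+1 := by linarith
  have hXY : (0:ℝ) < 2*((x*y : ℕ):ℝ)+1 := by positivity
  set a := Real.logb 3 (2*(x:ℝ)+1) with ha_def
  set b := Real.logb 3 (2*(y:ℝ)+1) with hb_def
  set c := Real.logb 3 (2*((x*y:ℕ):ℝ)+1) with hc_def
  set s := Real.logb 3 ((49:ℝ)/19) with hs_def
  have hc' : a + b - s ≤ c := by
    have h1 : (2*(x:ℝ)+1) * (2*(y:ℝ)+1) / (49/19) ≤ 2*((x*y:ℕ):ℝ)+1 := by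
      push_cast
      rw [div_le_iff₀ (by norm_num)]
      nlinarith [mul_nonneg (by linarith : (0:ℝ) ≤ (x:ℝ)-3) (by linarith : (0:ℝ) ≤ (y:ℝ)-3)]
    have h2 := Real.logb_le_logb_of_le (by norm_num : (1:ℝ) < 3)
      (by positivity) h1
    rw [Real.logb_div (by positivity) (by norm_num),
      Real.logb_mul (by positivity) (by positivity)] at h2
    exact h2
  have hexp : a * (2*a+1) + b * (2*b+1) ≤ c * (2*c+1) :=
    key1 (ha_lb hX) (ha_lb hY) hs_lb hs_ub hc'
  rw [f_eq (by linarith), f_eq (by linarith), f_eq hXY, ← Real.rpow_add (by norm_num)]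
  exact Real.rpow_le_rpow_left_iff (by norm_num : (1:ℝ) < 3) |>.mpr hexp

lemma main2 {y : ℕ} (hy : 3 ≤ y) : 60 * f y ≤ f ((2*y : ℕ)) := by
  have hyr : (3:ℝ) ≤ y := by exact_mod_cast hy
  have hY : (7:ℝ) ≤ 2*(y:ℝ)+1 := by linarith
  have hC : (0:ℝ) < 2*((2*y : ℕ):ℝ)+1 := by positivity
  set b := Real.logb 3 (2*(y:ℝ)+1) with hb_def
  set c := Real.logb 3 (2*((2*y:ℕ):ℝ)+1) with hc_def
  have hc' : b + 1/2 ≤ c := by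
    have hd := hd_lb
    have h1 : (13:ℝ)/7 * (2*(y:ℝ)+1) ≤ 2*((2*y:ℕ):ℝ)+1 := by
      push_cast; rw [div_mul_eq_mul_div, div_le_iff₀ (by norm_num)]; linarith
    have h2 := Real.logb_le_logb_of_le (by norm_num : (1:ℝ) < 3)
      (by positivity) h1
    rw [Real.logb_mul (by norm_num) (by positivity)] at h2
    linarith
  have hexp : Real.logb 3 60 + b * (2*b+1) ≤ c * (2*c+1) := by
    have := key2 (ha_lb hY) hc'
    linarith [h60]
  have h60eq : (60:ℝ) = (3:ℝ) ^ (Real.logb 3 60) :=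
    (Real.rpow_logb (by norm_num) (by norm_num) (by norm_num)).symm
  rw [f_eq (by linarith), f_eq hC, h60eq, ← Real.rpow_add (by norm_num)]
  exact Real.rpow_le_rpow_left_iff (by norm_num : (1:ℝ) < 3) |>.mpr hexp

lemma case22 : (60:ℝ) * 60 ≤ f 4 := by
  have h9 : Real.logb 3 (2*(4:ℝ)+1) = 2 := by
    have : (2*(4:ℝ)+1) = (3:ℝ)^(2:ℝ) := by
      rw [show (2:ℝ) = ((2:ℕ):ℝ) by norm_num, Real.rpow_natCast]; norm_num
    rw [this, Real.logb_rpow (by norm_num) (by norm_num)]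
  rw [f, h9]
  have : ((2:ℝ) * 4 + 1) ^ (2*(2:ℝ)+1) = (9:ℝ)^(5:ℕ) := by
    rw [show (2*(2:ℝ)+1) = ((5:ℕ):ℝ) by norm_num, Real.rpow_natCast]; norm_num
  rw [this]; norm_num

/-- **Submultiplicativity of `f̃` (Lemma A1(a)):** `f̃(x)·f̃(y) ≤ f̃(x·y)` for naturals
`x, y ≥ 2`. -/
theorem stmt13 : ∀ x y : ℕ, 2 ≤ x → 2 ≤ y → ftilde x * ftilde y ≤ ftilde (x * y) := by
  intro x y hx hy
  have h4 : 4 ≤ x * y := Nat.mul_le_mul hx hy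
  simp only [ftilde]
  rw [if_neg (by omega : ¬ x * y = 2)]
  rcases eq_or_lt_of_le hx with hx2 | hx3 <;> rcases eq_or_lt_of_le hy with hy2 | hy3
  · rw [← hx2, ← hy2, if_pos rfl]
    have : ((2*2 : ℕ) : ℝ) = 4 := by norm_num
    rw [this]
    exact case22
  · rw [← hx2, if_pos rfl, if_neg (by omega)]
    exact main2 hy3
  · rw [← hy2, if_neg (by omega), if_pos rfl, mul_comm (f (x:ℝ)) 60,
      show x * 2 = 2 * x from Nat.mul_comm x 2]
    exact main2 hx3
  · rw [if_neg (by omega), if_neg (by omega)]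
    exact main3 hx3 hy3
end

section
/- For all natural numbers x, t with x ≥ 2 and t ≥ 1, one has t!·(f̃(x))^t ≤ f̃(x^t). -/
namespace Stmt14Aux

lemma log_ratio {a b m n : ℕ} (ha : 0 < a) (h : a^m ≤ b^n) :
    (m:ℝ) * Real.log a ≤ (n:ℝ) * Real.log b := by
  have h1 : ((a:ℝ))^m ≤ (b:ℝ)^n := by exact_mod_cast h
  have := Real.log_le_log (by positivity) h1
  rwa [Real.log_pow, Real.log_pow] at this

lemma log2_lo : 0.6931 ≤ Real.log 2 := by nlinarith [Real.log_two_gt_d9]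
lemma log2_hi : Real.log 2 ≤ 0.6932 := by nlinarith [Real.log_two_lt_d9]

lemma log3_lo : 1.0986 ≤ Real.log 3 := by
  have h := log_ratio (a:=2) (b:=3) (m:=1054) (n:=665) (by norm_num) (by decide +kernel)
  have h2 := Real.log_two_gt_d9
  push_cast at h
  nlinarith
lemma log3_hi : Real.log 3 ≤ 1.0987 := by
  have h := log_ratio (a:=3) (b:=2) (m:=200) (n:=317) (by norm_num) (by decide)
  have h2 := Real.log_two_lt_d9
  push_cast at h
  nlinarith
lemma log7_lo : 1.9458 ≤ Real.log 7 := by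
  have h := log_ratio (a:=2) (b:=7) (m:=306) (n:=109) (by norm_num) (by decide)
  have h2 := Real.log_two_gt_d9
  push_cast at h
  nlinarith
lemma log7_hi : Real.log 7 ≤ 1.9460 := by
  have h := log_ratio (a:=7) (b:=2) (m:=571) (n:=1603) (by norm_num) (by decide +kernel)
  have h2 := Real.log_two_lt_d9
  push_cast at h
  nlinarith
lemma log19_lo : 2.9443 ≤ Real.log 19 := by
  have h := log_ratio (a:=2) (b:=19) (m:=497) (n:=117) (by norm_num) (by decide +kernel)
  have h2 := Real.log_two_gt_d9
  push_cast at h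
  nlinarith
lemma log60_hi : Real.log 60 ≤ 4.0945 := by
  have h := log_ratio (a:=60) (b:=2) (m:=43) (n:=254) (by norm_num) (by norm_num)
  have h2 := Real.log_two_lt_d9
  push_cast at h
  nlinarith

/-- `(t!)² · 2^t ≤ 2^(t²)`. -/
lemma fact_sq_bound : ∀ t : ℕ, t.factorial^2 * 2^t ≤ 2^(t*t) := by
  intro t
  induction t with
  | zero => norm_num
  | succ t ih =>
    have h1 : t + 1 ≤ 2^t := Nat.lt_two_pow_self
    have h4 : (t+1)^2 * 2 ≤ 2^(2*t+1) := by
      have hsq : (t+1)^2 ≤ (2^t)^2 := Nat.pow_le_pow_left h1 2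
      have he : (2^t)^2 * 2 = 2^(2*t+1) := by
        rw [← pow_mul, mul_comm t 2, pow_succ]
      calc (t+1)^2 * 2 ≤ (2^t)^2 * 2 := Nat.mul_le_mul_right 2 hsq
        _ = 2^(2*t+1) := he
    calc ((t+1).factorial)^2 * 2^(t+1) = (t+1)^2*2 * (t.factorial^2 * 2^t) := by
          rw [Nat.factorial_succ]; ring
      _ ≤ 2^(2*t+1) * 2^(t*t) := Nat.mul_le_mul h4 ih
      _ = 2^((t+1)*(t+1)) := by rw [← pow_add]; congr 1; ring

lemma fact_log_bound (t : ℕ) :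
    2 * Real.log (t.factorial : ℝ) ≤ (t:ℝ) * ((t:ℝ) - 1) * Real.log 2 := by
  have h := fact_sq_bound t
  have h1 : ((t.factorial : ℝ))^2 * 2^t ≤ 2^(t*t) := by exact_mod_cast h
  have hpos : (0:ℝ) < (t.factorial : ℝ)^2 * 2^t := by positivity
  have h2 := Real.log_le_log hpos h1
  rw [Real.log_mul (by positivity) (by positivity), Real.log_pow, Real.log_pow,
    Real.log_pow] at h2
  push_cast at h2
  nlinarith [h2]

lemma f_pos {y : ℝ} (hy : 0 ≤ y) : 0 < f y :=
  Real.rpow_pos_of_pos (by linarith) _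

lemma log_f {y : ℝ} (hy : 0 ≤ y) :
    Real.log (f y) = 2*(Real.log (2*y+1))^2/Real.log 3 + Real.log (2*y+1) := by
  have h1 : (0:ℝ) < 2*y+1 := by linarith
  have hs : (0:ℝ) < Real.log 3 := Real.log_pos (by norm_num)
  rw [f, Real.log_rpow h1, Real.logb]
  field_simp

lemma main_red (t : ℕ) (A B : ℝ) (hA : 0 < A) (hB : 0 < B)
    (h : Real.log ((t.factorial : ℕ) : ℝ) + (t:ℝ) * Real.log A ≤ Real.log B) :
    ((t.factorial : ℕ) : ℝ) * A^t ≤ B := by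
  have hf : (0:ℝ) < ((t.factorial : ℕ) : ℝ) := by exact_mod_cast t.factorial_pos
  rw [← Real.log_le_log_iff (by positivity) hB,
    Real.log_mul (ne_of_gt hf) (by positivity), Real.log_pow]
  exact h

lemma div_helper {a b s : ℝ} (hs : 0 < s) (h : a ≤ b) : a/s ≤ b/s := by
  exact (div_le_div_iff_of_pos_right hs).mpr h

-- polynomial case lemmas
lemma caseA (t F q l2 s L60 : ℝ) (ht : 2 ≤ t) (hF0 : 0 ≤ F) (hF : 2*F ≤ t*(t-1)*l2)
    (hq : (t+1)*l2 ≤ q) (hl1 : 0.6931 ≤ l2) (hl2 : l2 ≤ 0.6932)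
    (hs1 : 1.0986 ≤ s) (hs2 : s ≤ 1.0987) (h601 : 0 ≤ L60) (h602 : L60 ≤ 4.0945) :
    s*F + t*(s*L60) ≤ 2*q^2 + q*s := by
  nlinarith [sq_nonneg (t-2), mul_nonneg (sub_nonneg.2 ht) (sub_nonneg.2 hl1),
    sq_nonneg (q - (t+1)*l2), mul_nonneg (sub_nonneg.2 hq) (by nlinarith : (0:ℝ) ≤ q + (t+1)*l2),
    mul_nonneg (mul_nonneg (sub_nonneg.2 ht) (sub_nonneg.2 ht)) (sub_nonneg.2 hl1),
    mul_nonneg (sub_nonneg.2 hs1) hF0, mul_nonneg (by linarith : (0:ℝ) ≤ t) (sub_nonneg.2 h602)]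

lemma caseB (t F p q s l2 : ℝ) (ht : 3 ≤ t) (hF0 : 0 ≤ F) (hF : 2*F ≤ t*(t-1)*l2)
    (hq : l2 + t*s ≤ q) (hp1 : 1.9458 ≤ p) (hp2 : p ≤ 1.9460)
    (hl1 : 0.6931 ≤ l2) (hl2 : l2 ≤ 0.6932) (hs1 : 1.0986 ≤ s) (hs2 : s ≤ 1.0987) :
    s*F + 2*t*p^2 + t*p*s ≤ 2*q^2 + q*s := by
  have ht0 : (0:ℝ) ≤ t := by linarith
  have ht1 : (0:ℝ) ≤ t - 1 := by linarith
  nlinarith [mul_nonneg (sub_nonneg.2 hq) (by nlinarith : (0:ℝ) ≤ q + l2 + t*s),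
    mul_nonneg (mul_nonneg ht0 ht0) (by nlinarith : (0:ℝ) ≤ s^2 - 1.0986^2),
    mul_nonneg ht0 (by nlinarith : (0:ℝ) ≤ 1.9460^2 - p^2),
    mul_nonneg ht0 (by nlinarith : (0:ℝ) ≤ 1.9460*1.0987 - p*s),
    mul_nonneg ht0 (by linarith : (0:ℝ) ≤ s - 1.0986),
    mul_nonneg (mul_nonneg ht0 ht1) (by linarith : (0:ℝ) ≤ 0.6932 - l2),
    mul_nonneg (sub_nonneg.2 hs1) hF0,
    sq_nonneg (t-3), mul_nonneg (by linarith : (0:ℝ) ≤ t-3) ht0,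
    mul_nonneg (by linarith : (0:ℝ) ≤ t-3) (by linarith : (0:ℝ) ≤ s - 1.0986)]

lemma caseC (p q s l2 : ℝ) (hq : 2.9443 ≤ q) (hp1 : 1.9458 ≤ p) (hp2 : p ≤ 1.9460)
    (hl1 : 0.6931 ≤ l2) (hl2 : l2 ≤ 0.6932) (hs1 : 1.0986 ≤ s) (hs2 : s ≤ 1.0987) :
    s*l2 + 2*2*p^2 + 2*p*s ≤ 2*q^2 + q*s := by
  nlinarith [sq_nonneg (q - 2.9443)]

lemma caseD (t F p q s l2 w : ℝ) (ht : 2 ≤ t) (hF0 : 0 ≤ F) (hF : 2*F ≤ t*(t-1)*l2)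
    (hq : l2 + t*w ≤ q) (hp : p ≤ 2*s - 2*l2 + w) (hpl : 2*s ≤ p)
    (hl1 : 0.6931 ≤ l2) (hl2 : l2 ≤ 0.6932) (hs1 : 1.0986 ≤ s) (hs2 : s ≤ 1.0987) :
    s*F + 2*t*p^2 + t*p*s ≤ 2*q^2 + q*s := by
  have hqm : l2 + t*(p - 2*s + 2*l2) ≤ q := by
    nlinarith [mul_nonneg (by linarith : (0:ℝ) ≤ t) (by linarith : (0:ℝ) ≤ w - (p - 2*s + 2*l2))]
  have hqm0 : (0:ℝ) ≤ l2 + t*(p - 2*s + 2*l2) := by nlinarith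
  nlinarith [mul_nonneg (sub_nonneg.2 hqm) (by nlinarith : (0:ℝ) ≤ q + l2 + t*(p - 2*s + 2*l2)),
    sq_nonneg (t-2), sq_nonneg (p - 2*s), mul_nonneg (by linarith : (0:ℝ) ≤ t-2) (by linarith : (0:ℝ) ≤ p - 2*s),
    mul_nonneg (mul_nonneg (by linarith : (0:ℝ) ≤ t) (by linarith : (0:ℝ) ≤ t)) (sq_nonneg (p - 2*s)),
    mul_nonneg (mul_nonneg (by linarith : (0:ℝ) ≤ t-2) (by linarith : (0:ℝ) ≤ t)) (by linarith : (0:ℝ) ≤ p - 2*s),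
    mul_nonneg (mul_nonneg (by linarith : (0:ℝ) ≤ t) (by linarith : (0:ℝ) ≤ t)) (by linarith : (0:ℝ) ≤ s - 1.0986),
    mul_nonneg (sub_nonneg.2 hs1) hF0]

end Stmt14Aux

open Stmt14Aux in
/-- **Lemma A1(b):** `t!·(f̃(x))^t ≤ f̃(x^t)` for naturals `x ≥ 2`, `t ≥ 1`. -/
theorem stmt14 : ∀ x t : ℕ, 2 ≤ x → 1 ≤ t →
    (Nat.factorial t : ℝ) * (ftilde x) ^ t ≤ ftilde (x ^ t) := by
  intro x t hx ht
  rcases eq_or_lt_of_le ht with h1 | h1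
  · rw [← h1]; simp [Nat.factorial]
  · have ht2 : 2 ≤ t := h1
    have hs : (0:ℝ) < Real.log 3 := Real.log_pos (by norm_num)
    have hF0 : (0:ℝ) ≤ Real.log ((t.factorial : ℕ) : ℝ) :=
      Real.log_nonneg (by exact_mod_cast t.factorial_pos)
    have hF := fact_log_bound t
    have ht2R : (2:ℝ) ≤ (t:ℝ) := by exact_mod_cast ht2
    rcases eq_or_lt_of_le hx with hx2 | hx3
    · -- x = 2
      rw [← hx2]
      have h2t : (2:ℕ)^t ≠ 2 := by
        have h4 : (4:ℕ) ≤ 2^t := by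
          calc (4:ℕ) = 2^2 := rfl
            _ ≤ 2^t := Nat.pow_le_pow_right (by norm_num) ht2
        omega
      simp only [ftilde, if_pos rfl, if_neg h2t]
      apply main_red t 60 _ (by norm_num) (f_pos (by positivity))
      rw [log_f (by positivity)]
      set q := Real.log (2*(((2:ℕ)^t : ℕ):ℝ)+1) with hq_def
      have hq : ((t:ℝ)+1)*Real.log 2 ≤ q := by
        have hle : ((2:ℝ))^(t+1) ≤ 2*(((2:ℕ)^t : ℕ):ℝ)+1 := by
          push_cast
          rw [pow_succ]
          nlinarith [pow_pos (by norm_num : (0:ℝ) < 2) t]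
        calc ((t:ℝ)+1)*Real.log 2 = Real.log ((2:ℝ)^(t+1)) := by
              rw [Real.log_pow]; push_cast; ring
          _ ≤ q := Real.log_le_log (by positivity) hle
      have key := caseA (t:ℝ) (Real.log ((t.factorial : ℕ) : ℝ)) q (Real.log 2) (Real.log 3)
        (Real.log 60) ht2R hF0 hF hq log2_lo log2_hi log3_lo log3_hi
        (Real.log_nonneg (by norm_num)) log60_hi
      have e1 : Real.log ((t.factorial : ℕ) : ℝ) + (t:ℝ) * Real.log 60
          = (Real.log 3 * Real.log ((t.factorial : ℕ) : ℝ) + (t:ℝ)*(Real.log 3 * Real.log 60))/Real.log 3 := by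
        field_simp
      have e2 : 2*q^2/Real.log 3 + q = (2*q^2 + q*Real.log 3)/Real.log 3 := by
        field_simp
      rw [e1, e2]
      exact div_helper hs key
    · -- 3 ≤ x
      have hx3' : 3 ≤ x := hx3
      have hxne : x ≠ 2 := by omega
      have hxtne : x^t ≠ 2 := by
        have h3 : 3 ≤ x^t := le_trans hx3' (Nat.le_self_pow (by omega) x)
        omega
      simp only [ftilde, if_neg hxne, if_neg hxtne]
      have hx0 : (0:ℝ) ≤ (x:ℝ) := by positivity
      apply main_red t _ _ (f_pos hx0) (f_pos (by positivity))
      rw [log_f hx0, log_f (by positivity : (0:ℝ) ≤ ((x^t : ℕ):ℝ))]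
      have hcast : ((x^t : ℕ):ℝ) = (x:ℝ)^t := by push_cast; ring
      rw [hcast]
      set p := Real.log (2*(x:ℝ)+1) with hp_def
      set q := Real.log (2*(x:ℝ)^t+1) with hq_def
      set F := Real.log ((t.factorial : ℕ) : ℝ) with hF_def
      set s := Real.log 3 with hs_def
      have e1 : F + (t:ℝ) * (2*p^2/s + p) = (s*F + 2*(t:ℝ)*p^2 + (t:ℝ)*p*s)/s := by
        field_simp; ring
      have e2 : 2*q^2/s + q = (2*q^2 + q*s)/s := by field_simp
      rw [e1, e2]
      apply div_helper hs
      -- key inequality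
      have hxR : (3:ℝ) ≤ (x:ℝ) := by exact_mod_cast hx3'
      have hq_lb : Real.log 2 + (t:ℝ) * Real.log (x:ℝ) ≤ q := by
        have hle : 2*(x:ℝ)^t ≤ 2*(x:ℝ)^t + 1 := by linarith
        have hxt : (0:ℝ) < (x:ℝ)^t := by positivity
        calc Real.log 2 + (t:ℝ) * Real.log (x:ℝ)
            = Real.log (2*(x:ℝ)^t) := by
              rw [Real.log_mul (by norm_num) (ne_of_gt hxt), Real.log_pow]
          _ ≤ q := Real.log_le_log (by positivity) hle
      rcases eq_or_lt_of_le hx3' with hx3e | hx4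
      · -- x = 3
        have hxe : (x:ℝ) = 3 := by exact_mod_cast hx3e.symm
        have hp7 : p = Real.log 7 := by rw [hp_def, hxe]; norm_num
        have hq3 : Real.log 2 + (t:ℝ) * s ≤ q := by
          rw [hs_def]; rw [hxe] at hq_lb; exact hq_lb
        rcases eq_or_lt_of_le ht2 with ht2e | ht3
        · -- t = 2
          have hte : (t:ℝ) = 2 := by exact_mod_cast ht2e.symm
          have hq19 : q = Real.log 19 := by
            rw [hq_def, hxe, ← ht2e]; norm_num
          have hFe : F = Real.log 2 := by
            rw [hF_def, ← ht2e]; norm_num [Nat.factorial]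
          rw [hte, hFe, hq19, hp7]
          have := caseC (Real.log 7) (Real.log 19) s (Real.log 2) log19_lo log7_lo log7_hi
            log2_lo log2_hi (by rw [hs_def]; exact log3_lo) (by rw [hs_def]; exact log3_hi)
          linarith [this]
        · have ht3' : (3:ℝ) ≤ (t:ℝ) := by exact_mod_cast ht3
          rw [hp7]
          exact caseB (t:ℝ) F (Real.log 7) q s (Real.log 2) ht3' hF0 hF hq3 log7_lo log7_hi
            log2_lo log2_hi (by rw [hs_def]; exact log3_lo) (by rw [hs_def]; exact log3_hi)
      · -- 4 ≤ x
        have hx4' : (4:ℝ) ≤ (x:ℝ) := by exact_mod_cast hx4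
        set w := Real.log (x:ℝ) with hw_def
        have hxpos : (0:ℝ) < (x:ℝ) := by linarith
        have hp_ub : p ≤ 2*s - 2*Real.log 2 + w := by
          have hle : 2*(x:ℝ)+1 ≤ 9/4*(x:ℝ) := by linarith
          have h94 : Real.log (9/4*(x:ℝ)) = 2*s - 2*Real.log 2 + w := by
            rw [Real.log_mul (by norm_num) (ne_of_gt hxpos), Real.log_div (by norm_num) (by norm_num),
              show (9:ℝ) = 3^2 by norm_num, show (4:ℝ) = 2^2 by norm_num,
              Real.log_pow, Real.log_pow, hs_def]
            push_cast; ring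
          calc p ≤ Real.log (9/4*(x:ℝ)) := Real.log_le_log (by positivity) hle
            _ = 2*s - 2*Real.log 2 + w := h94
        have hp_lb : 2*s ≤ p := by
          have hle : (9:ℝ) ≤ 2*(x:ℝ)+1 := by linarith
          have h9 : Real.log 9 = 2*s := by
            rw [show (9:ℝ) = 3^2 by norm_num, Real.log_pow, hs_def]; push_cast; ring
          calc 2*s = Real.log 9 := h9.symm
            _ ≤ p := Real.log_le_log (by norm_num) hle
        exact caseD (t:ℝ) F p q s (Real.log 2) w ht2R hF0 hF hq_lb hp_ub hp_lb
          log2_lo log2_hi (by rw [hs_def]; exact log3_lo) (by rw [hs_def]; exact log3_hi)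
end

section
/- (a) For all natural numbers x, y with x ≥ 2 and y ≥ 2, one has (x+2)!·(y+2)! ≤ (x·y+2)!. (b) For all natural numbers x, t with x ≥ 3 and t ≥ 1, one has t!·((x+2)!)^t ≤ (x^t+2)!. -/
lemma fac_add_le (a b c : ℕ) (h : a + b ≤ c) :
    Nat.factorial a * Nat.factorial b ≤ Nat.factorial c :=
  le_trans (Nat.le_of_dvd (Nat.factorial_pos _)
    (Nat.factorial_mul_factorial_dvd_factorial_add a b)) (Nat.factorial_le h)

lemma partA : ∀ x y : ℕ, 2 ≤ x → 2 ≤ y →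
    Nat.factorial (x + 2) * Nat.factorial (y + 2) ≤ Nat.factorial (x * y + 2) := by
  intro x y hx hy
  by_cases h : x + y + 2 ≤ x * y
  · exact fac_add_le _ _ _ (by omega)
  · push_neg at h
    have hx3 : x ≤ 3 := by nlinarith
    have hy3 : y ≤ 3 := by nlinarith
    interval_cases x <;> interval_cases y <;> first | (exfalso; omega) | decide

/-- **Lemma A2:** (a) `(x+2)!·(y+2)! ≤ (x·y+2)!` for naturals `x, y ≥ 2`;
(b) `t!·((x+2)!)^t ≤ (x^t+2)!` for naturals `x ≥ 3`, `t ≥ 1`. -/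
theorem stmt15 :
    (∀ x y : ℕ, 2 ≤ x → 2 ≤ y →
      Nat.factorial (x + 2) * Nat.factorial (y + 2) ≤ Nat.factorial (x * y + 2)) ∧
    (∀ x t : ℕ, 3 ≤ x → 1 ≤ t →
      Nat.factorial t * (Nat.factorial (x + 2)) ^ t ≤ Nat.factorial (x ^ t + 2)) := by
  refine ⟨partA, ?_⟩
  intro x t hx ht
  induction t, ht using Nat.le_induction with
  | base => simp [pow_one]
  | succ n hn ih =>
    have hxn : x ≤ x ^ n := Nat.le_self_pow (by omega) x
    have hnlt : n < x ^ n := Nat.lt_pow_self (by omega)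
    have step1 : Nat.factorial (n + 1) * Nat.factorial (x + 2) ^ (n + 1)
        ≤ (n + 1) * (Nat.factorial (x + 2) * Nat.factorial (x ^ n + 2)) := by
      have : Nat.factorial (n + 1) * Nat.factorial (x + 2) ^ (n + 1)
          = (n + 1) * (Nat.factorial (x + 2) * (Nat.factorial n * Nat.factorial (x + 2) ^ n)) := by
        rw [Nat.factorial_succ, pow_succ]; ring
      rw [this]
      exact Nat.mul_le_mul_left _ (Nat.mul_le_mul_left _ ih)
    have step2 : Nat.factorial (x + 2) * Nat.factorial (x ^ n + 2)
        ≤ Nat.factorial (x ^ n + x + 4) := fac_add_le _ _ _ (by omega)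
    have step3 : (n + 1) * Nat.factorial (x ^ n + x + 4)
        ≤ Nat.factorial (x ^ n + x + 5) := by
      rw [show x ^ n + x + 5 = (x ^ n + x + 4) + 1 from rfl, Nat.factorial_succ]
      exact Nat.mul_le_mul_right _ (by omega)
    have step4 : Nat.factorial (x ^ n + x + 5) ≤ Nat.factorial (x ^ (n + 1) + 2) := by
      apply Nat.factorial_le
      have : 3 ≤ x ^ n := le_trans hx hxn
      calc x ^ n + x + 5 ≤ x * x ^ n + 2 := by nlinarith
        _ = x ^ (n + 1) + 2 := by ring_nf
    calc Nat.factorial (n + 1) * Nat.factorial (x + 2) ^ (n + 1)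
        ≤ (n + 1) * (Nat.factorial (x + 2) * Nat.factorial (x ^ n + 2)) := step1
      _ ≤ (n + 1) * Nat.factorial (x ^ n + x + 4) := Nat.mul_le_mul_left _ step2
      _ ≤ Nat.factorial (x ^ n + x + 5) := step3
      _ ≤ Nat.factorial (x ^ (n + 1) + 2) := step4
end

section
/- Let Γ denote the real Gamma function (so Γ(n+3) = (n+2)! for natural n). Then: (a) f(x) ≤ Γ(x+3) for all real x ≥ 10; (b) x²·f(x) ≤ Γ(x+3) for all real x ≥ 14; (c) x·f(x) ≤ Γ(x+3) for all real x ≥ 13. -/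
open Real Nat

namespace Aux16

lemma one_lt_three : (1:ℝ) < 3 := by norm_num

lemma log_three_pos : 0 < Real.log 3 := Real.log_pos one_lt_three

lemma one_le_log_three : 1 ≤ Real.log 3 := by
  rw [Real.le_log_iff_exp_le (by norm_num : (0:ℝ) < 3)]
  calc Real.exp 1 ≤ 2.7182818286 := Real.exp_one_lt_d9.le
    _ ≤ 3 := by norm_num

lemma f_pos {x : ℝ} (hx : 0 ≤ x) : 0 < f x :=
  Real.rpow_pos_of_pos (by linarith) _

lemma logb_arg_nonneg {x : ℝ} (hx : 0 ≤ x) : 0 ≤ Real.logb 3 (2*x+1) :=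
  Real.logb_nonneg one_lt_three (by linarith)

lemma f_mono {x y : ℝ} (hx : 0 ≤ x) (hxy : x ≤ y) : f x ≤ f y := by
  have h1 : (0:ℝ) < 2*x+1 := by linarith
  have h2 : (1:ℝ) ≤ 2*y+1 := by linarith
  have he : 2 * Real.logb 3 (2*x+1) + 1 ≤ 2 * Real.logb 3 (2*y+1) + 1 := by
    have := Real.logb_le_logb_of_le one_lt_three h1 (by linarith : 2*x+1 ≤ 2*y+1)
    linarith
  have h0 : 0 ≤ 2 * Real.logb 3 (2*x+1) + 1 := by
    have := logb_arg_nonneg hx; linarith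
  calc f x = (2*x+1) ^ (2 * Real.logb 3 (2*x+1) + 1) := rfl
    _ ≤ (2*y+1) ^ (2 * Real.logb 3 (2*x+1) + 1) :=
        Real.rpow_le_rpow h1.le (by linarith) h0
    _ ≤ (2*y+1) ^ (2 * Real.logb 3 (2*y+1) + 1) :=
        Real.rpow_le_rpow_of_exponent_le h2 he

lemma pow3_split (k r : ℕ) : (3:ℝ)^(200*k+r) = ((3:ℝ)^200)^k * 3^r := by
  rw [pow_add, pow_mul]

lemma rpow_div_pow (p q : ℕ) (hq : q ≠ 0) : ((3:ℝ) ^ ((p:ℝ)/q)) ^ q = 3 ^ p := by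
  rw [← Real.rpow_natCast ((3:ℝ) ^ ((p:ℝ)/(q:ℝ))) q, ← Real.rpow_mul (by norm_num : (0:ℝ) ≤ 3),
    div_mul_cancel₀ (p:ℝ) (by exact_mod_cast hq : (q:ℝ) ≠ 0), Real.rpow_natCast]

lemma logb_le_of_pow {z : ℝ} (p q : ℕ) (hq : 0 < q) (hz : 1 ≤ z)
    (h : z ^ q ≤ 3 ^ p) : Real.logb 3 z ≤ (p:ℝ)/q := by
  rw [Real.logb_le_iff_le_rpow one_lt_three (by linarith : 0 < z)]
  refine le_of_pow_le_pow_left₀ hq.ne' (by positivity) ?_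
  rw [rpow_div_pow p q hq.ne']
  exact h

lemma rpow_mul_le (c N : ℝ) (p q : ℕ) (hq : 0 < q) (hc : 0 ≤ c) (hN : 0 ≤ N)
    (h : c ^ q * 3 ^ p ≤ N ^ q) : c * (3:ℝ) ^ ((p:ℝ)/q) ≤ N := by
  refine le_of_pow_le_pow_left₀ hq.ne' hN ?_
  rw [mul_pow, rpow_div_pow p q hq.ne']
  exact h

lemma f_eq {x : ℝ} (hx : 0 ≤ x) :
    f x = (3:ℝ) ^ (Real.logb 3 (2*x+1) * (2 * Real.logb 3 (2*x+1) + 1)) := by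
  have h1 : (0:ℝ) < 2*x+1 := by linarith
  rw [Real.rpow_mul (by norm_num : (0:ℝ) ≤ 3),
    Real.rpow_logb (by norm_num) (by norm_num) h1]
  rfl

lemma f_base (z A c N : ℝ) (p q : ℕ) (hq : 0 < q) (hz : 0 ≤ z) (hc : 0 ≤ c) (hN : 0 ≤ N)
    (hA : Real.logb 3 (2*z+1) ≤ A)
    (hexp : A*(2*A+1) ≤ (p:ℝ)/q)
    (hnum : c ^ q * 3 ^ p ≤ N ^ q) : c * f z ≤ N := by
  have hl := logb_arg_nonneg hz
  have h1 : f z ≤ (3:ℝ) ^ ((p:ℝ)/q) := by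
    rw [f_eq hz]
    apply Real.rpow_le_rpow_of_exponent_le (by norm_num : (1:ℝ) ≤ 3)
    nlinarith
  calc c * f z ≤ c * (3:ℝ) ^ ((p:ℝ)/q) := mul_le_mul_of_nonneg_left h1 hc
    _ ≤ N := rpow_mul_le c N p q hq hc hN hnum

lemma log_f {x : ℝ} (hx : 0 ≤ x) :
    Real.log (f x) = (2 * Real.logb 3 (2*x+1) + 1) * (Real.logb 3 (2*x+1) * Real.log 3) := by
  have h1 : (0:ℝ) < 2*x+1 := by linarith
  rw [show f x = (2*x+1) ^ (2 * Real.logb 3 (2*x+1) + 1) from rfl, Real.log_rpow h1]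
  congr 1
  rw [Real.logb, div_mul_cancel₀ _ (ne_of_gt log_three_pos)]

lemma logf_diff {x y : ℝ} (hx : 0 ≤ x) (hxy : x ≤ y) :
    Real.log (f y) ≤ Real.log (f x) +
      2*(y-x)/(2*x+1) * (2*(Real.logb 3 (2*x+1) + Real.logb 3 (2*y+1)) + 1) := by
  have h1 : (0:ℝ) < 2*x+1 := by linarith
  have h2 : (0:ℝ) < 2*y+1 := by linarith
  set a := Real.logb 3 (2*x+1) with ha'
  set b := Real.logb 3 (2*y+1) with hb'
  have ha : 0 ≤ a := logb_arg_nonneg hx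
  have hab : a ≤ b := Real.logb_le_logb_of_le one_lt_three h1 (by linarith)
  have hd : (b - a) * Real.log 3 ≤ 2*(y-x)/(2*x+1) := by
    have hba : b - a = Real.log ((2*y+1)/(2*x+1)) / Real.log 3 := by
      rw [Real.log_div (ne_of_gt h2) (ne_of_gt h1), ha', hb', Real.logb, Real.logb, sub_div]
    rw [hba, div_mul_cancel₀ _ (ne_of_gt log_three_pos)]
    calc Real.log ((2*y+1)/(2*x+1)) ≤ (2*y+1)/(2*x+1) - 1 :=
          Real.log_le_sub_one_of_pos (by positivity)
      _ = 2*(y-x)/(2*x+1) := by field_simp; ring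
  rw [log_f hx, log_f (hx.trans hxy)]
  have hC : 0 ≤ 2*(a+b)+1 := by linarith
  have key := mul_le_mul_of_nonneg_right hd hC
  nlinarith [key]

end Aux16

namespace Aux16

lemma log_le_frac {y : ℝ} (hy : 25 ≤ y) : Real.log y ≤ 2 * y / (5 * Real.exp 1) := by
  have hy0 : (0:ℝ) < y := by linarith
  have hsq : Real.sqrt y ≤ y / 5 := by
    rw [show y/5 = Real.sqrt ((y/5)^2) from Real.sqrt_sq (by linarith) |>.symm]
    exact Real.sqrt_le_sqrt (by nlinarith)
  have h1 : 0 < Real.sqrt y := Real.sqrt_pos.mpr hy0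
  have hlog : Real.log (Real.sqrt y) ≤ Real.sqrt y / Real.exp 1 := by
    have h2 := Real.log_le_sub_one_of_pos (show 0 < Real.sqrt y / Real.exp 1 by positivity)
    rw [Real.log_div (ne_of_gt h1) (Real.exp_ne_zero 1), Real.log_exp] at h2
    linarith
  have hls : Real.log y = 2 * Real.log (Real.sqrt y) := by
    rw [Real.log_sqrt hy0.le]; ring
  have he : 0 < Real.exp 1 := Real.exp_pos 1
  have hmono : Real.sqrt y / Real.exp 1 ≤ (y/5) / Real.exp 1 := by gcongr
  rw [hls]
  calc 2 * Real.log (Real.sqrt y) ≤ 2 * ((y/5) / Real.exp 1) := by linarith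
    _ = 2 * y / (5 * Real.exp 1) := by field_simp

lemma f_step {x : ℝ} (hx : 11 ≤ x) : f (x+1) ≤ 4 * f x := by
  have h0 : (0:ℝ) ≤ x := by linarith
  have key := logf_diff h0 (by linarith : x ≤ x+1)
  set a := Real.logb 3 (2*x+1) with ha'
  set b := Real.logb 3 (2*(x+1)+1) with hb'
  have ha : 0 ≤ a := logb_arg_nonneg h0
  have hab : a ≤ b := Real.logb_le_logb_of_le one_lt_three (by linarith) (by linarith)
  have hbnn : 0 ≤ b := ha.trans hab
  have hb_log : b ≤ Real.log (2*(x+1)+1) := by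
    rw [hb', Real.logb]
    exact div_le_self (Real.log_nonneg (by linarith)) one_le_log_three
  have hlog23 : Real.log (2*(x+1)+1) ≤ 2*(2*(x+1)+1)/(5*Real.exp 1) :=
    log_le_frac (by linarith)
  have he : (2.7182818283:ℝ) ≤ Real.exp 1 := Real.exp_one_gt_d9.le
  have hepos : (0:ℝ) < Real.exp 1 := Real.exp_pos 1
  have h2 : b * (5*Real.exp 1) ≤ 2*(2*(x+1)+1) := by
    rw [← le_div_iff₀ (by positivity)]
    exact hb_log.trans hlog23
  have hinc : 2*((x+1)-x)/(2*x+1) * (2*(a+b)+1) ≤ 1.3862 := by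
    rw [div_mul_eq_mul_div, div_le_iff₀ (by linarith : (0:ℝ) < 2*x+1)]
    nlinarith [mul_nonneg hbnn (sub_nonneg.mpr he)]
  have hlog4 : (1.3862:ℝ) ≤ Real.log 4 := by
    have h4 : Real.log 4 = 2 * Real.log 2 := by
      rw [show (4:ℝ) = 2^2 by norm_num, Real.log_pow]; push_cast; ring
    have := Real.log_two_gt_d9
    linarith
  have hfin : Real.log (f (x+1)) ≤ Real.log (4 * f x) := by
    rw [Real.log_mul (by norm_num) (ne_of_gt (f_pos h0))]
    linarith
  have h4fpos : 0 < 4 * f x := by have := f_pos h0; linarith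
  have := Real.exp_le_exp.mpr hfin
  rwa [Real.exp_log (f_pos (by linarith)), Real.exp_log h4fpos] at this

end Aux16

namespace Aux16

lemma Gamma_fact (m : ℕ) : Real.Gamma ((m:ℝ)+1) = (m) ! := Real.Gamma_nat_eq_factorial m

lemma Gamma_fact3 (n : ℕ) : Real.Gamma ((n:ℝ)+3) = ((n+2) ! : ℝ) := by
  have h := Gamma_fact (n+2)
  rw [show ((n:ℝ)+3) = ((n+2:ℕ):ℝ)+1 by push_cast; ring, h]

lemma Gamma_fact2 (n : ℕ) : Real.Gamma ((n:ℝ)+2) = ((n+1) ! : ℝ) := by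
  have h := Gamma_fact (n+1)
  rw [show ((n:ℝ)+2) = ((n+1:ℕ):ℝ)+1 by push_cast; ring, h]

lemma Gamma_ge (n : ℕ) {x : ℝ} (hx : (n:ℝ) ≤ x) :
    ((n+2) ! : ℝ) * ((n:ℝ)+2) ^ (x - (n:ℝ)) ≤ Real.Gamma (x+3) := by
  have hn0 : (0:ℝ) ≤ (n:ℝ) := n.cast_nonneg
  rcases eq_or_lt_of_le hx with h | h
  · rw [← h, sub_self, Real.rpow_zero, mul_one, Gamma_fact3]
  · have hcv := Real.convexOn_log_Gamma
    have hs := hcv.slope_mono_adjacent (x := (n:ℝ)+2) (z := x+3)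
      (Set.mem_Ioi.mpr (by linarith)) (Set.mem_Ioi.mpr (by linarith))
      (show (n:ℝ)+2 < (n:ℝ)+3 by linarith) (show (n:ℝ)+3 < x+3 by linarith)
    simp only [Function.comp_apply] at hs
    rw [Gamma_fact3, Gamma_fact2] at hs
    have hden1 : ((n:ℝ)+3) - ((n:ℝ)+2) = 1 := by ring
    have hden2 : (x+3) - ((n:ℝ)+3) = x - n := by ring
    rw [hden1, hden2, div_one] at hs
    have hfpos1 : (0:ℝ) < ((n+1) ! : ℝ) := by positivity
    have hfpos2 : (0:ℝ) < ((n+2) ! : ℝ) := by positivity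
    have hlogstep : Real.log ((n+2) ! : ℝ) - Real.log ((n+1) ! : ℝ) = Real.log ((n:ℝ)+2) := by
      rw [← Real.log_div (ne_of_gt hfpos2) (ne_of_gt hfpos1)]
      congr 1
      rw [div_eq_iff (ne_of_gt hfpos1)]
      push_cast [show n+2 = (n+1)+1 from rfl, Nat.factorial_succ]
      ring
    rw [hlogstep] at hs
    have hxn : 0 < x - (n:ℝ) := by linarith
    rw [le_div_iff₀ hxn] at hs
    have hGpos : 0 < Real.Gamma (x+3) := Real.Gamma_pos_of_pos (by linarith)
    have hP : (0:ℝ) < ((n+2) ! : ℝ) * ((n:ℝ)+2) ^ (x - (n:ℝ)) := by positivity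
    have hlog : Real.log (((n+2) ! : ℝ) * ((n:ℝ)+2) ^ (x - (n:ℝ))) ≤
        Real.log (Real.Gamma (x+3)) := by
      rw [Real.log_mul (ne_of_gt hfpos2) (by positivity),
        Real.log_rpow (by linarith : (0:ℝ) < (n:ℝ)+2)]
      linarith
    have := Real.exp_le_exp.mpr hlog
    rwa [Real.exp_log hP, Real.exp_log hGpos] at this

lemma Gamma_ge' (n : ℕ) {x : ℝ} (hx : (n:ℝ) ≤ x) : ((n+2) ! : ℝ) ≤ Real.Gamma (x+3) := by
  refine le_trans ?_ (Gamma_ge n hx)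
  nth_rewrite 1 [← mul_one ((n+2) ! : ℝ)]
  refine mul_le_mul_of_nonneg_left ?_ (by positivity)
  rw [show (1:ℝ) = ((n:ℝ)+2)^(0:ℝ) from (Real.rpow_zero _).symm]
  exact Real.rpow_le_rpow_of_exponent_le (by linarith [(n.cast_nonneg : (0:ℝ) ≤ n)]) (by linarith)

end Aux16

namespace Aux16

lemma base_a : f 12 ≤ (6227020800:ℝ) := by
  have hA : Real.logb 3 (2*(12:ℝ)+1) ≤ 147/50 := by
    rw [show (2*(12:ℝ)+1) = 25 by norm_num]
    exact logb_le_of_pow 147 50 (by norm_num) (by norm_num) (by norm_num)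
  have h := f_base 12 (147/50) 1 6227020800 2023 100 (by norm_num) (by norm_num)
    (by norm_num) (by norm_num) hA (by norm_num) (by rw [show (2023:ℕ) = 200*10+23 from rfl, pow3_split]; norm_num)
  linarith

lemma base_c : 14 * f 14 ≤ (1307674368000:ℝ) := by
  have hA : Real.logb 3 (2*(14:ℝ)+1) ≤ 307/100 := by
    rw [show (2*(14:ℝ)+1) = 29 by norm_num]
    exact logb_le_of_pow 307 100 (by norm_num) (by norm_num) (by rw [show (307:ℕ) = 200*1+107 from rfl, pow3_split]; norm_num)
  exact f_base 14 (307/100) 14 1307674368000 548 25 (by norm_num) (by norm_num)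
    (by norm_num) (by norm_num) hA (by norm_num) (by rw [show (548:ℕ) = 200*2+148 from rfl, pow3_split]; norm_num)

lemma base_b : 225 * f 15 ≤ (20922789888000:ℝ) := by
  have hA : Real.logb 3 (2*(15:ℝ)+1) ≤ 313/100 := by
    rw [show (2*(15:ℝ)+1) = 31 by norm_num]
    exact logb_le_of_pow 313 100 (by norm_num) (by norm_num) (by rw [show (313:ℕ) = 200*1+113 from rfl, pow3_split]; norm_num)
  exact f_base 15 (313/100) 225 20922789888000 2273 100 (by norm_num) (by norm_num)
    (by norm_num) (by norm_num) hA (by norm_num) (by rw [show (2273:ℕ) = 200*11+73 from rfl, pow3_split]; norm_num)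

lemma Qa (n : ℕ) (hn : 11 ≤ n) : f ((n:ℝ)+1) ≤ ((n+2) ! : ℝ) := by
  induction n, hn using Nat.le_induction with
  | base =>
    rw [show ((11:ℕ):ℝ)+1 = 12 by norm_num]
    calc f 12 ≤ (6227020800:ℝ) := base_a
      _ = (((11:ℕ)+2) ! : ℝ) := by norm_num [Nat.factorial]
  | succ n hn ih =>
    have hn' : (11:ℝ) ≤ (n:ℝ) := by exact_mod_cast hn
    have h1 : f (((n:ℝ)+1)+1) ≤ 4 * f ((n:ℝ)+1) := f_step (by linarith)
    have hF : (0:ℝ) ≤ ((n+2) ! : ℝ) := by positivity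
    rw [show ((n+1:ℕ):ℝ)+1 = ((n:ℝ)+1)+1 by push_cast; ring]
    calc f (((n:ℝ)+1)+1) ≤ 4 * f ((n:ℝ)+1) := h1
      _ ≤ 4 * ((n+2) ! : ℝ) := mul_le_mul_of_nonneg_left ih (by norm_num)
      _ ≤ ((n+1+2) ! : ℝ) := by
          have he : ((n+1+2) ! : ℝ) = ((n:ℝ)+3) * ((n+2) ! : ℝ) := by
            rw [show n+1+2 = (n+2)+1 from rfl, Nat.factorial_succ]
            push_cast; ring
          rw [he]; nlinarith

lemma Qc (n : ℕ) (hn : 13 ≤ n) : ((n:ℝ)+1) * f ((n:ℝ)+1) ≤ ((n+2) ! : ℝ) := by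
  induction n, hn using Nat.le_induction with
  | base =>
    rw [show ((13:ℕ):ℝ)+1 = 14 by norm_num]
    calc (14:ℝ) * f 14 ≤ (1307674368000:ℝ) := base_c
      _ = (((13:ℕ)+2) ! : ℝ) := by norm_num [Nat.factorial]
  | succ n hn ih =>
    have hn' : (13:ℝ) ≤ (n:ℝ) := by exact_mod_cast hn
    have h1 : f (((n:ℝ)+1)+1) ≤ 4 * f ((n:ℝ)+1) := f_step (by linarith)
    have hF : (0:ℝ) ≤ ((n+2) ! : ℝ) := by positivity
    have hfp : (0:ℝ) < f ((n:ℝ)+1) := f_pos (by linarith)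
    have hfp2 : (0:ℝ) < f (((n:ℝ)+1)+1) := f_pos (by linarith)
    have he : ((n+1+2) ! : ℝ) = ((n:ℝ)+3) * ((n+2) ! : ℝ) := by
      rw [show n+1+2 = (n+2)+1 from rfl, Nat.factorial_succ]
      push_cast; ring
    rw [show ((n+1:ℕ):ℝ)+1 = ((n:ℝ)+1)+1 by push_cast; ring, he]
    set m := (n:ℝ)
    set F := ((n+2) ! : ℝ)
    set v := f ((m+1)+1)
    set u := f (m+1)
    have key : (m+1) * (((m+1)+1) * v) ≤ (m+1) * (((m+2)+1) * F) := by
      nlinarith [mul_le_mul_of_nonneg_left h1 (show (0:ℝ) ≤ (m+1)*(m+2) by nlinarith),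
        mul_le_mul_of_nonneg_left ih (show (0:ℝ) ≤ 4*(m+2) by nlinarith),
        mul_nonneg hF (show (0:ℝ) ≤ m*m-5 by nlinarith)]
    have := le_of_mul_le_mul_left key (show (0:ℝ) < m+1 by linarith)
    linarith

lemma Qb (n : ℕ) (hn : 14 ≤ n) : ((n:ℝ)+1)^2 * f ((n:ℝ)+1) ≤ ((n+2) ! : ℝ) := by
  induction n, hn using Nat.le_induction with
  | base =>
    rw [show ((14:ℕ):ℝ)+1 = 15 by norm_num]
    calc ((15:ℝ))^2 * f 15 = 225 * f 15 := by norm_num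
      _ ≤ (20922789888000:ℝ) := base_b
      _ = (((14:ℕ)+2) ! : ℝ) := by norm_num [Nat.factorial]
  | succ n hn ih =>
    have hn' : (14:ℝ) ≤ (n:ℝ) := by exact_mod_cast hn
    have h1 : f (((n:ℝ)+1)+1) ≤ 4 * f ((n:ℝ)+1) := f_step (by linarith)
    have hF : (0:ℝ) ≤ ((n+2) ! : ℝ) := by positivity
    have hfp : (0:ℝ) < f ((n:ℝ)+1) := f_pos (by linarith)
    have hfp2 : (0:ℝ) < f (((n:ℝ)+1)+1) := f_pos (by linarith)
    have he : ((n+1+2) ! : ℝ) = ((n:ℝ)+3) * ((n+2) ! : ℝ) := by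
      rw [show n+1+2 = (n+2)+1 from rfl, Nat.factorial_succ]
      push_cast; ring
    rw [show ((n+1:ℕ):ℝ)+1 = ((n:ℝ)+1)+1 by push_cast; ring, he]
    set m := (n:ℝ)
    set F := ((n+2) ! : ℝ)
    set v := f ((m+1)+1)
    set u := f (m+1)
    have key : ((m+1)^2) * ((((m+1)+1)^2) * v) ≤ ((m+1)^2) * (((m+2)+1) * F) := by
      nlinarith [mul_le_mul_of_nonneg_left h1 (show (0:ℝ) ≤ (m+1)^2*(m+2)^2 by positivity),
        mul_le_mul_of_nonneg_left ih (show (0:ℝ) ≤ 4*(m+2)^2 by positivity),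
        mul_nonneg hF (show (0:ℝ) ≤ m*m*m + m*m - 9*m - 13 by nlinarith)]
    have := le_of_mul_le_mul_left key (show (0:ℝ) < (m+1)^2 by positivity)
    linarith

end Aux16

namespace Aux16

lemma part_a_low {x : ℝ} (hx : 10 ≤ x) (hx' : x ≤ 11) : f x ≤ Real.Gamma (x+3) := by
  have h10 : (0:ℝ) ≤ 10 := by norm_num
  have key := logf_diff (x := 10) (y := x) h10 hx
  set a := Real.logb 3 (2*(10:ℝ)+1) with ha'
  set b := Real.logb 3 (2*x+1) with hb'
  have hb23 : b ≤ 143/50 := by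
    have h1 : b ≤ Real.logb 3 23 :=
      Real.logb_le_logb_of_le one_lt_three (by linarith) (by linarith)
    exact h1.trans (logb_le_of_pow 143 50 (by norm_num) (by norm_num) (by norm_num))
  have ha23 : a ≤ 143/50 := by
    have h1 : a ≤ Real.logb 3 23 := by
      rw [ha']
      exact Real.logb_le_logb_of_le one_lt_three (by norm_num) (by norm_num)
    exact h1.trans (logb_le_of_pow 143 50 (by norm_num) (by norm_num) (by norm_num))
  have hf10 : f 10 ≤ (479001600:ℝ) := by
    have hA : Real.logb 3 (2*(10:ℝ)+1) ≤ 693/250 := by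
      rw [show (2*(10:ℝ)+1) = 21 by norm_num]
      exact logb_le_of_pow 693 250 (by norm_num) (by norm_num) (by rw [show (693:ℕ) = 200*3+93 from rfl, pow3_split]; norm_num)
    have h := f_base 10 (693/250) 1 479001600 1814 100 (by norm_num) (by norm_num)
      (by norm_num) (by norm_num) hA (by norm_num) (by rw [show (1814:ℕ) = 200*9+14 from rfl, pow3_split]; norm_num)
    linarith
  have hlog12 : (2:ℝ) ≤ Real.log 12 := by
    rw [Real.le_log_iff_exp_le (by norm_num : (0:ℝ) < 12)]
    have h1 : Real.exp 2 = Real.exp 1 * Real.exp 1 := by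
      rw [← Real.exp_add]; norm_num
    nlinarith [Real.exp_one_lt_d9, Real.exp_pos 1]
  have hG := Gamma_ge 10 (x := x) (by exact_mod_cast hx)
  rw [show (((10:ℕ)+2) ! : ℝ) = 479001600 by norm_num [Nat.factorial],
    show (((10:ℕ):ℝ)) = 10 by norm_num, show ((10:ℝ)+2) = 12 by norm_num] at hG
  have hP : (0:ℝ) < 479001600 * (12:ℝ)^(x-10) := by positivity
  have hlogchain : Real.log (f x) ≤ Real.log (479001600 * (12:ℝ)^(x-10)) := by
    rw [Real.log_mul (by norm_num) (by positivity), Real.log_rpow (by norm_num : (0:ℝ) < 12)]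
    have hxm : (0:ℝ) ≤ x - 10 := by linarith
    have h2 : Real.log (f 10) ≤ Real.log 479001600 :=
      (Real.log_le_log_iff (f_pos h10) (by norm_num)).mpr hf10
    have hbnn : 0 ≤ b := logb_arg_nonneg (by linarith)
    have hann : 0 ≤ a := by rw [ha']; exact logb_arg_nonneg h10
    have h3 : 2*(x-10)/(2*10+1) * (2*(a+b)+1) ≤ (x-10)*2 := by nlinarith
    have h4 : (x-10)*2 ≤ (x-10)*Real.log 12 := by nlinarith
    linarith
  have hfin := Real.exp_le_exp.mpr hlogchain
  rw [Real.exp_log (f_pos (by linarith)), Real.exp_log hP] at hfin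
  linarith

end Aux16

/-- **Lemma A3:** with `Γ` the real Gamma function (so `Γ(n+3) = (n+2)!`):
(a) `f(x) ≤ Γ(x+3)` for `x ≥ 10`; (b) `x²·f(x) ≤ Γ(x+3)` for `x ≥ 14`;
(c) `x·f(x) ≤ Γ(x+3)` for `x ≥ 13`. -/
theorem stmt16 :
    (∀ x : ℝ, 10 ≤ x → f x ≤ Real.Gamma (x + 3)) ∧
    (∀ x : ℝ, 14 ≤ x → x ^ 2 * f x ≤ Real.Gamma (x + 3)) ∧
    (∀ x : ℝ, 13 ≤ x → x * f x ≤ Real.Gamma (x + 3)) := by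
  refine ⟨?_, ?_, ?_⟩
  · intro x hx
    by_cases h11 : x ≤ 11
    · exact Aux16.part_a_low hx h11
    push_neg at h11
    have hx0 : (0:ℝ) ≤ x := by linarith
    have hnx : ((⌊x⌋₊:ℕ):ℝ) ≤ x := Nat.floor_le hx0
    have hxn : x < (⌊x⌋₊:ℕ) + 1 := Nat.lt_floor_add_one x
    have hn11 : 11 ≤ ⌊x⌋₊ := Nat.le_floor (by exact_mod_cast h11.le)
    calc f x ≤ f (((⌊x⌋₊:ℕ):ℝ)+1) := Aux16.f_mono hx0 (by linarith)
      _ ≤ ((⌊x⌋₊+2) ! : ℝ) := Aux16.Qa ⌊x⌋₊ hn11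
      _ ≤ Real.Gamma (x+3) := Aux16.Gamma_ge' ⌊x⌋₊ hnx
  · intro x hx
    have hx0 : (0:ℝ) ≤ x := by linarith
    have hnx : ((⌊x⌋₊:ℕ):ℝ) ≤ x := Nat.floor_le hx0
    have hxn : x < (⌊x⌋₊:ℕ) + 1 := Nat.lt_floor_add_one x
    have hn14 : 14 ≤ ⌊x⌋₊ := Nat.le_floor (by exact_mod_cast hx)
    calc x^2 * f x ≤ (((⌊x⌋₊:ℕ):ℝ)+1)^2 * f (((⌊x⌋₊:ℕ):ℝ)+1) := by
          apply mul_le_mul (by nlinarith) (Aux16.f_mono hx0 (by linarith))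
            (Aux16.f_pos hx0).le (by positivity)
      _ ≤ ((⌊x⌋₊+2) ! : ℝ) := Aux16.Qb ⌊x⌋₊ hn14
      _ ≤ Real.Gamma (x+3) := Aux16.Gamma_ge' ⌊x⌋₊ hnx
  · intro x hx
    have hx0 : (0:ℝ) ≤ x := by linarith
    have hnx : ((⌊x⌋₊:ℕ):ℝ) ≤ x := Nat.floor_le hx0
    have hxn : x < (⌊x⌋₊:ℕ) + 1 := Nat.lt_floor_add_one x
    have hn13 : 13 ≤ ⌊x⌋₊ := Nat.le_floor (by exact_mod_cast hx)
    calc x * f x ≤ (((⌊x⌋₊:ℕ):ℝ)+1) * f (((⌊x⌋₊:ℕ):ℝ)+1) := by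
          apply mul_le_mul (by linarith) (Aux16.f_mono hx0 (by linarith))
            (Aux16.f_pos hx0).le (by positivity)
      _ ≤ ((⌊x⌋₊+2) ! : ℝ) := Aux16.Qc ⌊x⌋₊ hn13
      _ ≤ Real.Gamma (x+3) := Aux16.Gamma_ge' ⌊x⌋₊ hnx
end

section
/- Let β = (log₂ 3 − 1)/2. For all real numbers x, y with x ≥ 2 and y ≥ 2^(β·x), one has 2^(2x²+x+1)·f(y) ≤ f(2^x·y). -/
set_option maxHeartbeats 1000000 in
/-- **Lemma A5:** with `β = (log₂ 3 − 1)/2`, for all reals `x ≥ 2` and `y ≥ 2^(β·x)`,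
`2^(2x²+x+1)·f(y) ≤ f(2^x·y)`. -/
theorem stmt17 : ∀ x y : ℝ, 2 ≤ x → (2 : ℝ) ^ (((Real.logb 2 3 - 1) / 2) * x) ≤ y →
    (2 : ℝ) ^ (2 * x ^ 2 + x + 1) * f y ≤ f ((2 : ℝ) ^ x * y) := by
  intro x y hx hy
  have hl2 : (0:ℝ) < Real.log 2 := Real.log_pos (by norm_num)
  have hl3 : (0:ℝ) < Real.log 3 := Real.log_pos (by norm_num)
  -- bounds on L = logb 2 3
  set L : ℝ := Real.logb 2 3 with hLdef
  have hlog89 : 3 * Real.log 2 ≤ 2 * Real.log 3 := by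
    have h := Real.log_le_log (by norm_num : (0:ℝ) < 2^(3:ℕ))
      (by norm_num : (2:ℝ)^(3:ℕ) ≤ 3^(2:ℕ))
    rwa [Real.log_pow, Real.log_pow] at h
    
  have hlog243 : 5 * Real.log 3 ≤ 8 * Real.log 2 := by
    have h := Real.log_le_log (by norm_num : (0:ℝ) < 3^(5:ℕ))
      (by norm_num : (3:ℝ)^(5:ℕ) ≤ 2^(8:ℕ))
    rwa [Real.log_pow, Real.log_pow] at h
    
  have hL1 : 3/2 ≤ L := by
    rw [hLdef, Real.logb, le_div_iff₀ hl2]; linarith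
  have hL2 : L ≤ 8/5 := by
    rw [hLdef, Real.logb, div_le_iff₀ hl2]; linarith
  have hLlog : Real.log 3 = L * Real.log 2 := by
    rw [hLdef, Real.logb]; field_simp
  -- basic positivity
  have hy1 : (1:ℝ) ≤ y := by
    refine le_trans ?_ hy
    exact Real.one_le_rpow (by norm_num) (by nlinarith)
  have hy0 : (0:ℝ) < y := by linarith
  have hpx : (0:ℝ) < (2:ℝ)^x := Real.rpow_pos_of_pos (by norm_num) x
  have hu0 : (0:ℝ) < 2*y+1 := by linarith
  have hv0 : (0:ℝ) < 2*((2:ℝ)^x*y)+1 := by positivity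
  -- log of y
  have ht : ((L-1)/2)*x * Real.log 2 ≤ Real.log y := by
    have h := Real.log_le_log (Real.rpow_pos_of_pos (by norm_num) _) hy
    rwa [Real.log_rpow (by norm_num)] at h
  set t : ℝ := Real.log y with htdef
  set A : ℝ := Real.log (2*y+1) with hAdef
  set B : ℝ := Real.log (2*((2:ℝ)^x*y)+1) with hBdef
  have hA0 : 0 ≤ A := Real.log_nonneg (by linarith)
  have hA : A ≤ Real.log 3 + t := by
    have h1 : 2*y+1 ≤ 3*y := by linarith
    have h := Real.log_le_log hu0 h1
    rwa [Real.log_mul (by norm_num) (ne_of_gt hy0)] at h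
  have hB : (x+1)*Real.log 2 + t ≤ B := by
    have h1 : (2:ℝ)^(x+1)*y ≤ 2*((2:ℝ)^x*y)+1 := by
      rw [Real.rpow_add (by norm_num), Real.rpow_one]; nlinarith
    have h := Real.log_le_log (by positivity) h1
    rwa [Real.log_mul (by positivity) (ne_of_gt hy0),
      Real.log_rpow (by norm_num)] at h
  -- reduce to a log inequality
  unfold f
  rw [← Real.log_le_log_iff (by positivity) (Real.rpow_pos_of_pos hv0 _),
    Real.log_mul (by positivity) (by positivity),
    Real.log_rpow (by norm_num), Real.log_rpow hu0, Real.log_rpow hv0]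
  simp only [Real.logb, ← hAdef, ← hBdef]
  set l2 : ℝ := Real.log 2
  set l3 : ℝ := Real.log 3
  have key : (2*x^2+x+1)*l2*l3 + (2*A+l3)*A ≤ (2*B+l3)*B := by
    rw [hLlog]
    rw [hLlog] at hA
    have hsqA : A^2 ≤ (L*l2 + t)^2 := by nlinarith
    have ht0 : 0 ≤ t := le_trans (by nlinarith) ht
    have hB0 : 0 ≤ (x+1)*l2 + t := by nlinarith
    have hsqB : ((x+1)*l2 + t)^2 ≤ B^2 := by nlinarith
    have hxL : 0 ≤ x + 1 - L := by nlinarith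
    have c1 : L*l2*((x+1)*l2+t) ≤ L*l2*B :=
      mul_le_mul_of_nonneg_left hB (by positivity)
    have c2 : L*l2*A ≤ L*l2*(L*l2+t) :=
      mul_le_mul_of_nonneg_left hA (by positivity)
    have c3 : (4*(x+1-L)*l2) * ((L-1)/2*x*l2) ≤ (4*(x+1-L)*l2) * t :=
      mul_le_mul_of_nonneg_left ht (by positivity)
    have hl2sq : 0 < l2*l2 := mul_pos hl2 hl2
    have h1 : 0 ≤ 2+4*L-2*L^2 := by nlinarith
    have h3 : 0 ≤ x*(2+4*L-2*L^2) + 2 - 3*L^2 := by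
      nlinarith [mul_nonneg (by linarith : (0:ℝ) ≤ x-2) h1]
    have hP : 0 ≤ (x*(2+4*L-2*L^2) + 2 - 3*L^2) * (l2*l2) :=
      mul_nonneg h3 hl2sq.le
    nlinarith [hsqA, hsqB, c1, c2, c3, hP]
  have e1 : (2*x^2+x+1)*l2 + (2*(A/l3)+1)*A = ((2*x^2+x+1)*l2*l3 + (2*A+l3)*A)/l3 := by
    field_simp
  have e2 : (2*(B/l3)+1)*B = ((2*B+l3)*B)/l3 := by
    field_simp
  rw [e1, e2]
  exact div_le_div_of_nonneg_right key hl3.le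
end

section
/- (a) For all real n ≥ 2, f(n) ≥ 4.796·n^(2·log₃ n + 3.5). (b) For all real n ≥ 4, n·f(n) ≤ n^(2·log₂ n + 5). (c) For all real n ≥ 37, n·f(n) ≤ 2·n^(2·log₂ n + 1). (d) For all real n, m ≥ 2, (2·n^(2·log₂ n + 1))·(2·m^(2·log₂ m + 1)) ≤ 2·(n·m)^(2·log₂(n·m) + 1). -/
lemma log3_lt : Real.log 3 < 1.099 := by
  rw [Real.log_lt_iff_lt_exp (by norm_num)]
  have h2 : Real.exp 1.099 = Real.exp 0.5495 ^ 2 := by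
    rw [← Real.exp_nat_mul]; norm_num
  have hs : (1.7323:ℝ) ≤ Real.exp 0.5495 := by
    have := Real.sum_le_exp_of_nonneg (by norm_num : (0:ℝ) ≤ 0.5495) 6
    refine le_trans ?_ this
    simp [Finset.sum_range_succ, Nat.factorial]
    norm_num
  rw [h2]; nlinarith

lemma log3_gt : (1.098:ℝ) < Real.log 3 := by
  rw [Real.lt_log_iff_exp_lt (by norm_num)]
  have h2 : Real.exp 1.098 = Real.exp 0.549 ^ 2 := by
    rw [← Real.exp_nat_mul]; norm_num
  have hs : Real.exp 0.549 ≤ 1.73153 := by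
    have := Real.exp_bound' (by norm_num : (0:ℝ) ≤ 0.549) (by norm_num) (n := 8) (by norm_num)
    refine le_trans this ?_
    simp [Finset.sum_range_succ, Nat.factorial]
    norm_num
  rw [h2]; nlinarith [Real.exp_pos (0.549:ℝ)]

set_option maxHeartbeats 2000000 in
/-- **Lemma A7:** (a) `f(n) ≥ 4.796·n^(2·log₃ n + 3.5)` for `n ≥ 2`;
(b) `n·f(n) ≤ n^(2·log₂ n + 5)` for `n ≥ 4`;
(c) `n·f(n) ≤ 2·n^(2·log₂ n + 1)` for `n ≥ 37`;
(d) `(2·n^(2·log₂ n+1))·(2·m^(2·log₂ m+1)) ≤ 2·(nm)^(2·log₂(nm)+1)` for `n, m ≥ 2`. -/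
theorem stmt18 :
    (∀ n : ℝ, 2 ≤ n → 4.796 * n ^ (2 * Real.logb 3 n + 3.5) ≤ f n) ∧
    (∀ n : ℝ, 4 ≤ n → n * f n ≤ n ^ (2 * Real.logb 2 n + 5)) ∧
    (∀ n : ℝ, 37 ≤ n → n * f n ≤ 2 * n ^ (2 * Real.logb 2 n + 1)) ∧
    (∀ n m : ℝ, 2 ≤ n → 2 ≤ m →
      (2 * n ^ (2 * Real.logb 2 n + 1)) * (2 * m ^ (2 * Real.logb 2 m + 1)) ≤
        2 * (n * m) ^ (2 * Real.logb 2 (n * m) + 1)) := by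
  refine ⟨?_, ?_, ?_, ?_⟩
  · intro n hn
    have hn0 : (0:ℝ) < n := by linarith
    have h210 : (0:ℝ) < 2 * n + 1 := by linarith
    rw [f, ← Real.log_le_log_iff
      (mul_pos (by norm_num) (Real.rpow_pos_of_pos hn0 _)) (Real.rpow_pos_of_pos h210 _),
      Real.log_mul (by norm_num) (Real.rpow_pos_of_pos hn0 _).ne',
      Real.log_rpow hn0, Real.log_rpow h210]
    simp only [Real.logb]
    set a := Real.log 2 with ha
    set b := Real.log 3 with hb
    set v := Real.log n with hv
    set u := Real.log (2 * n + 1) with hu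
    set L := Real.log 4.796 with hL
    have ha1 : 0.6931471 < a := lt_trans (by norm_num) Real.log_two_gt_d9
    have ha2 : a < 0.6931472 := lt_trans Real.log_two_lt_d9 (by norm_num)
    have hb1 : 1.098 < b := log3_gt
    have hb2 : b < 1.099 := log3_lt
    have hb0 : (0:ℝ) < b := by linarith
    have hva : a ≤ v := by rw [ha, hv]; exact Real.log_le_log (by norm_num) hn
    have huv : a + v ≤ u := by
      rw [ha, hv, hu, ← Real.log_mul two_ne_zero hn0.ne']
      exact Real.log_le_log (by linarith) (by linarith)
    have hLb : L ≤ 1.5762944 := by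
      rw [hL]
      have h1 : Real.log 4.796 ≤ Real.log (2^2 * 1.095^2) :=
        Real.log_le_log (by norm_num) (by norm_num)
      rw [Real.log_mul (by norm_num) (by norm_num), Real.log_pow, Real.log_pow] at h1
      have h2 : Real.log 1.095 ≤ 0.095 := by
        have := Real.log_le_sub_one_of_pos (show (0:ℝ) < 1.095 by norm_num)
        linarith
      push_cast at h1
      linarith
    rw [← sub_nonneg]
    have expand : (2 * (u / b) + 1) * u - (L + (2 * (v / b) + 3.5) * v) =
        (2*u^2 + b*u - 2*v^2 - 3.5*b*v - b*L) / b := by field_simp; ring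
    rw [expand]
    apply div_nonneg _ hb0.le
    nlinarith [mul_nonneg (show (0:ℝ) ≤ u - v - a by linarith) (show (0:ℝ) ≤ u + v + a by linarith),
      mul_nonneg (show (0:ℝ) ≤ b by linarith) (show (0:ℝ) ≤ u - v - a by linarith),
      mul_nonneg (show (0:ℝ) ≤ v - a by linarith) (show (0:ℝ) ≤ 4*a - 2.5*b by nlinarith),
      mul_nonneg (show (0:ℝ) ≤ 1.099 - b by linarith) (show (0:ℝ) ≤ 1.5762944 - L by linarith)]
  · intro n hn
    have hn0 : (0:ℝ) < n := by linarith
    have h210 : (0:ℝ) < 2 * n + 1 := by linarith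
    rw [f, ← Real.log_le_log_iff
      (mul_pos hn0 (Real.rpow_pos_of_pos h210 _)) (Real.rpow_pos_of_pos hn0 _),
      Real.log_mul hn0.ne' (Real.rpow_pos_of_pos h210 _).ne',
      Real.log_rpow hn0, Real.log_rpow h210]
    simp only [Real.logb]
    set a := Real.log 2 with ha
    set b := Real.log 3 with hb
    set v := Real.log n with hv
    set u := Real.log (2 * n + 1) with hu
    have ha1 : 0.6931471 < a := lt_trans (by norm_num) Real.log_two_gt_d9
    have ha2 : a < 0.6931472 := lt_trans Real.log_two_lt_d9 (by norm_num)
    have hb1 : 1.098 < b := log3_gt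
    have hb2 : b < 1.099 := log3_lt
    have ha0 : (0:ℝ) < a := by linarith
    have hb0 : (0:ℝ) < b := by linarith
    have hva : 2 * a ≤ v := by
      rw [ha, hv]
      have : Real.log (2^2) ≤ Real.log n := Real.log_le_log (by norm_num) (by nlinarith)
      rw [Real.log_pow] at this; push_cast at this; linarith
    have hu0 : (0:ℝ) ≤ u := by
      rw [hu]; exact Real.log_nonneg (by linarith)
    have huv : u ≤ v + (2*b - 2*a) := by
      rw [ha, hb, hv, hu]
      have h1 : Real.log (2*n+1) ≤ Real.log ((3^2/2^2) * n) :=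
        Real.log_le_log (by linarith) (by nlinarith)
      rw [Real.log_mul (by norm_num) hn0.ne', Real.log_div (by norm_num) (by norm_num),
        Real.log_pow, Real.log_pow] at h1
      push_cast at h1; linarith
    rw [← sub_nonneg]
    have expand : (2 * (v / a) + 5) * v - (v + (2 * (u / b) + 1) * u) =
        (2*b*v^2 + 4*a*b*v - 2*a*u^2 - a*b*u) / (a*b) := by field_simp; ring
    rw [expand]
    apply div_nonneg _ (mul_pos ha0 hb0).le
    nlinarith [mul_nonneg (mul_nonneg ha0.le (show (0:ℝ) ≤ v + (2*b-2*a) - u by linarith))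
        (show (0:ℝ) ≤ v + (2*b-2*a) + u by linarith),
      mul_nonneg (show (0:ℝ) ≤ v - 2*a by linarith) (show (0:ℝ) ≤ a*(8*a - 5*b) by nlinarith),
      mul_nonneg (show (0:ℝ) ≤ v - 2*a by linarith) (show (0:ℝ) ≤ b - a by linarith),
      sq_nonneg (v - 2*a), mul_pos ha0 hb0]
  · intro n hn
    have hn0 : (0:ℝ) < n := by linarith
    have h210 : (0:ℝ) < 2 * n + 1 := by linarith
    rw [f, ← Real.log_le_log_iff
      (mul_pos hn0 (Real.rpow_pos_of_pos h210 _))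
      (mul_pos two_pos (Real.rpow_pos_of_pos hn0 _)),
      Real.log_mul hn0.ne' (Real.rpow_pos_of_pos h210 _).ne',
      Real.log_mul two_ne_zero (Real.rpow_pos_of_pos hn0 _).ne',
      Real.log_rpow hn0, Real.log_rpow h210]
    simp only [Real.logb]
    set a := Real.log 2 with ha
    set b := Real.log 3 with hb
    set v := Real.log n with hv
    set u := Real.log (2 * n + 1) with hu
    have ha1 : 0.6931471 < a := lt_trans (by norm_num) Real.log_two_gt_d9
    have ha2 : a < 0.6931472 := lt_trans Real.log_two_lt_d9 (by norm_num)
    have hb1 : 1.098 < b := log3_gt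
    have hb2 : b < 1.099 := log3_lt
    clear_value a b v u
    have ha0 : (0:ℝ) < a := by linarith
    have hb0 : (0:ℝ) < b := by linarith
    have hva : 2*a + 2*b + 1/37 ≤ v := by
      have l36 : Real.log (2^2*3^2) = 2*a + 2*b := by
        rw [Real.log_mul (by norm_num) (by norm_num), Real.log_pow, Real.log_pow,
          ← ha, ← hb]; push_cast; ring
      have hdiv : Real.log ((2^2*3^2)/n) ≤ (2^2*3^2)/n - 1 :=
        Real.log_le_sub_one_of_pos (by positivity)
      rw [Real.log_div (by norm_num) hn0.ne', l36] at hdiv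
      have h36 : ((2:ℝ)^2*3^2)/n ≤ 36/37 := by
        rw [div_le_div_iff₀ hn0 (by norm_num)]; linarith
      rw [hv]; linarith
    have hu0 : (0:ℝ) ≤ u := by
      rw [hu]; exact Real.log_nonneg (by linarith)
    have huv : u ≤ v + a + 1/74 := by
      have hdiv : Real.log ((2*n+1)/(2*n)) ≤ (2*n+1)/(2*n) - 1 :=
        Real.log_le_sub_one_of_pos (by positivity)
      rw [Real.log_div h210.ne' (by linarith)] at hdiv
      have hq : (2*n+1)/(2*n) ≤ 1 + 1/74 := by
        rw [div_le_iff₀ (by linarith)]; linarith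
      have hl2n : Real.log (2*n) = a + v := by
        rw [ha, hv, Real.log_mul two_ne_zero hn0.ne']
      rw [hu]; rw [hl2n] at hdiv; linarith
    rw [← sub_nonneg]
    have expand : a + (2 * (v / a) + 1) * v - (v + (2 * (u / b) + 1) * u) =
        (a^2*b + 2*b*v^2 - 2*a*u^2 - a*b*u) / (a*b) := by field_simp; ring
    rw [expand]
    apply div_nonneg _ (mul_pos ha0 hb0).le
    have h1 : (0:ℝ) ≤ v + a + 1/74 - u := by linarith
    have h2 : (0:ℝ) ≤ v + a + 1/74 + u := by linarith
    have hQ : 2*a*u^2 + a*b*u ≤ 2*a*(v + a + 1/74)^2 + a*b*(v + a + 1/74) := by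
      nlinarith [mul_nonneg (mul_nonneg ha0.le h1) h2,
        mul_nonneg (mul_pos ha0 hb0).le h1]
    have hv' : (3.6093212:ℝ) ≤ v := by linarith
    have k2 : 4*a*(a+1/74) + a*b ≤ 2.721049 := by
      nlinarith [mul_nonneg (show (0:ℝ) ≤ 0.6931472 - a by linarith) (show (0:ℝ) ≤ 0.6931472 + a by linarith),
        mul_nonneg (show (0:ℝ) ≤ 0.6931472 - a by linarith) hb0.le,
        mul_nonneg ha0.le (show (0:ℝ) ≤ 1.099 - b by linarith)]
    have hc2 : (a+1/74)^2 ≤ 0.49936948 := by nlinarith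
    have k3 : (-0.7031:ℝ) ≤ a^2*b - 2*a*(a+1/74)^2 - a*b*(a+1/74) := by
      have e : a^2*b - 2*a*(a+1/74)^2 - a*b*(a+1/74) = -(2*a*(a+1/74)^2 + a*b/74) := by
        ring
      rw [e]
      nlinarith [mul_nonneg ha0.le (show (0:ℝ) ≤ 0.49936948 - (a+1/74)^2 by linarith),
        mul_nonneg ha0.le (show (0:ℝ) ≤ 1.099 - b by linarith)]
    have hQ3 : (0:ℝ) ≤ 0.8097056*v^2 - 2.721049*v - 0.7031 := by
      nlinarith [sq_nonneg (v - 3.6093212)]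
    have hQ2 : 0.8097056*v^2 - 2.721049*v - 0.7031 ≤
        a^2*b + 2*b*v^2 - 2*a*(v + a + 1/74)^2 - a*b*(v + a + 1/74) := by
      have e1 : (0:ℝ) ≤ (2*(b-a) - 0.8097056) * v^2 :=
        mul_nonneg (by linarith) (sq_nonneg v)
      have e2 : (0:ℝ) ≤ (2.721049 - (4*a*(a+1/74) + a*b)) * v :=
        mul_nonneg (by linarith) (by linarith)
      nlinarith [e1, e2, k3]
    nlinarith [hQ, hQ2, hQ3]
  · intro n m hn hm
    have hn0 : (0:ℝ) < n := by linarith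
    have hm0 : (0:ℝ) < m := by linarith
    have hnm0 : (0:ℝ) < n * m := mul_pos hn0 hm0
    have h1 : (0:ℝ) < 2 * n ^ (2 * Real.logb 2 n + 1) :=
      mul_pos two_pos (Real.rpow_pos_of_pos hn0 _)
    have h2 : (0:ℝ) < 2 * m ^ (2 * Real.logb 2 m + 1) :=
      mul_pos two_pos (Real.rpow_pos_of_pos hm0 _)
    have h3 : (0:ℝ) < 2 * (n*m) ^ (2 * Real.logb 2 (n*m) + 1) :=
      mul_pos two_pos (Real.rpow_pos_of_pos hnm0 _)
    rw [← Real.log_le_log_iff (mul_pos h1 h2) h3, Real.log_mul h1.ne' h2.ne',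
      Real.log_mul two_ne_zero (Real.rpow_pos_of_pos hn0 _).ne',
      Real.log_mul two_ne_zero (Real.rpow_pos_of_pos hm0 _).ne',
      Real.log_mul two_ne_zero (Real.rpow_pos_of_pos hnm0 _).ne',
      Real.log_rpow hn0, Real.log_rpow hm0, Real.log_rpow hnm0,
      Real.log_mul hn0.ne' hm0.ne']
    simp only [Real.logb, Real.log_mul hn0.ne' hm0.ne']
    set a := Real.log 2 with ha
    set v := Real.log n with hv
    set w := Real.log m with hw
    have ha1 : 0.6931471 < a := lt_trans (by norm_num) Real.log_two_gt_d9
    have ha0 : (0:ℝ) < a := by linarith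
    have hva : a ≤ v := by
      rw [ha, hv]; exact Real.log_le_log (by norm_num) hn
    have hwa : a ≤ w := by
      rw [ha, hw]; exact Real.log_le_log (by norm_num) hm
    have key : a * a ≤ 4 * (v * w) := by nlinarith
    rw [← sub_nonneg]
    have expand : a + (2 * ((v + w) / a) + 1) * (v + w) -
        (a + (2 * (v / a) + 1) * v + (a + (2 * (w / a) + 1) * w)) = (4*(v*w) - a*a)/a := by
      field_simp; ring
    rw [expand]
    exact div_nonneg (by linarith) ha0.le
end

section
/- (a) For all natural numbers n, t with n ≥ 13 and t ≥ 1, one has t!·((n+2)!)^t ≤ (n·t+2)!. (b) For all natural numbers n, m with n ≥ 13 and m ≥ 13, one has (n+2)!·(m+2)! ≤ (n+m+2)!. -/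
lemma auxB' : ∀ n m : ℕ, 13 ≤ n → 13 ≤ m →
    Nat.factorial (n + 2) * Nat.factorial (m + 3) ≤ Nat.factorial (n + m + 2) := by
  have base : ∀ n : ℕ, 13 ≤ n →
      Nat.factorial (n + 2) * Nat.factorial 16 ≤ Nat.factorial (n + 15) := by
    intro n hn
    induction n, hn using Nat.le_induction with
    | base => norm_num [Nat.factorial]
    | succ n hn ih =>
      have h1 : Nat.factorial (n + 1 + 2) * Nat.factorial 16
          = (n + 3) * (Nat.factorial (n + 2) * Nat.factorial 16) := by
        rw [show n + 1 + 2 = n + 2 + 1 from rfl, Nat.factorial_succ]; ring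
      rw [h1]
      calc (n + 3) * (Nat.factorial (n+2) * Nat.factorial 16)
          ≤ (n + 3) * Nat.factorial (n + 15) := Nat.mul_le_mul_left _ ih
        _ ≤ (n + 16) * Nat.factorial (n + 15) := Nat.mul_le_mul_right _ (by omega)
        _ = Nat.factorial (n + 1 + 15) := by
            rw [show n + 1 + 15 = n + 15 + 1 from rfl]
            conv_rhs => rw [Nat.factorial_succ]
  intro n m hn hm
  induction m, hm using Nat.le_induction with
  | base => simpa using base n hn
  | succ m hm ih =>
    have h1 : Nat.factorial (m + 1 + 3) = (m + 4) * Nat.factorial (m + 3) := by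
      rw [show m + 1 + 3 = m + 3 + 1 from rfl, Nat.factorial_succ]
    calc Nat.factorial (n+2) * Nat.factorial (m+1+3)
        = (m + 4) * (Nat.factorial (n+2) * Nat.factorial (m+3)) := by rw [h1]; ring
      _ ≤ (m + 4) * Nat.factorial (n + m + 2) := Nat.mul_le_mul_left _ ih
      _ ≤ (n + m + 3) * Nat.factorial (n + m + 2) := Nat.mul_le_mul_right _ (by omega)
      _ = Nat.factorial (n + (m+1) + 2) := by
          rw [show n + (m+1) + 2 = n + m + 2 + 1 by ring]
          conv_rhs => rw [Nat.factorial_succ]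

/-- **Lemma A9:** (a) `t!·((n+2)!)^t ≤ (n·t+2)!` for naturals `n ≥ 13`, `t ≥ 1`;
(b) `(n+2)!·(m+2)! ≤ (n+m+2)!` for naturals `n, m ≥ 13`. -/
theorem stmt19 :
    (∀ n t : ℕ, 13 ≤ n → 1 ≤ t →
      Nat.factorial t * (Nat.factorial (n + 2)) ^ t ≤ Nat.factorial (n * t + 2)) ∧
    (∀ n m : ℕ, 13 ≤ n → 13 ≤ m →
      Nat.factorial (n + 2) * Nat.factorial (m + 2) ≤ Nat.factorial (n + m + 2)) := by
  constructor
  · intro n t hn ht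
    induction t, ht using Nat.le_induction with
    | base => simp [Nat.factorial]
    | succ t ht ih =>
      have htn : t + 1 ≤ n * t + 3 := by nlinarith
      have hnt : 13 ≤ n * t := by nlinarith
      have hB := auxB' n (n * t) hn hnt
      calc Nat.factorial (t+1) * Nat.factorial (n+2) ^ (t+1)
          = (t+1) * Nat.factorial (n+2) * (Nat.factorial t * Nat.factorial (n+2) ^ t) := by
            rw [Nat.factorial_succ, pow_succ]; ring
        _ ≤ (t+1) * Nat.factorial (n+2) * Nat.factorial (n*t+2) :=
            Nat.mul_le_mul_left _ ih
        _ = Nat.factorial (n+2) * ((t+1) * Nat.factorial (n*t+2)) := by ring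
        _ ≤ Nat.factorial (n+2) * ((n*t+3) * Nat.factorial (n*t+2)) :=
            Nat.mul_le_mul_left _ (Nat.mul_le_mul_right _ htn)
        _ = Nat.factorial (n+2) * Nat.factorial (n*t+3) := by
            rw [show n*t+3 = n*t+2+1 from rfl]
            conv_rhs => rw [Nat.factorial_succ (n*t+2)]
        _ ≤ Nat.factorial (n + n*t + 2) := hB
        _ = Nat.factorial (n * (t+1) + 2) := by ring_nf
  · intro n m hn hm
    calc Nat.factorial (n+2) * Nat.factorial (m+2)
        ≤ Nat.factorial (n+2) * Nat.factorial (m+3) :=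
          Nat.mul_le_mul_left _ (Nat.factorial_le (by omega))
      _ ≤ Nat.factorial (n + m + 2) := auxB' n m hn hm
end
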